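/- Let m, k ≥ 1, let 𝟙 ∈ ℝ^k be the column vector of ones, and define P_V X = X − (1/k) X 𝟙 𝟙^t on real m × k matrices. Let h : ℝ^{m×k} → ℝ be any function, let Z ∈ ℝ^{m×k}, and suppose W* is a minimizer of W ↦ (1/2)‖P_V Z − W‖_F^2 + h(W) over the subspace {W ∈ ℝ^{m×k} : W 𝟙 = 0}. Then: (a) every minimizer X of X ↦ (1/2)‖Z − X‖_F^2 + h(P_V X) over ℝ^{m×k} satisfies X 𝟙 = Z 𝟙; and (b) the matrix X* = (1/k) Z 𝟙 𝟙^t + W* is a minimizer of X ↦ (1/2)‖Z − X‖_F^2 + h(P_V X) over all of ℝ^{m×k}. (In particular, taking h = γλ‖·‖_*, the proximal operator of the centered nuclear norm penalty Z ↦ λ‖P_V Z‖_* at Z equals (1/k) Z 𝟙 𝟙^t plus the proximal operator of γλ‖·‖_* evaluated at P_V Z.) -/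

import Mathlib

open Matrix

/-- Reduction of the proximal problem for the centered penalty `X ↦ h(P_V X)`:
if `W*` minimizes `W ↦ ½‖P_V Z - W‖_F² + h(W)` over `{W : W𝟙 = 0}`, then
(a) every minimizer `X` of `X ↦ ½‖Z - X‖_F² + h(P_V X)` satisfies `X𝟙 = Z𝟙`, and
(b) `X* = (1/k) Z 𝟙 𝟙ᵗ + W*` is a minimizer of `X ↦ ½‖Z - X‖_F² + h(P_V X)`.
Squared Frobenius norms are written via `‖A‖_F² = trace(Aᵀ A)`. -/
theorem stmt11 (m k : ℕ) (hm : 1 ≤ m) (hk : 1 ≤ k)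
    (PV : Matrix (Fin m) (Fin k) ℝ → Matrix (Fin m) (Fin k) ℝ)
    (hPV : ∀ X, PV X = X - (k : ℝ)⁻¹ • (X * Matrix.of (fun _ _ => (1 : ℝ))))
    (h : Matrix (Fin m) (Fin k) ℝ → ℝ)
    (Z Wstar : Matrix (Fin m) (Fin k) ℝ)
    (hWmem : Wstar.mulVec (fun _ => (1 : ℝ)) = 0)
    (hWmin : ∀ W : Matrix (Fin m) (Fin k) ℝ, W.mulVec (fun _ => (1 : ℝ)) = 0 →
      (1 / 2) * Matrix.trace ((PV Z - Wstar)ᵀ * (PV Z - Wstar)) + h Wstar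
        ≤ (1 / 2) * Matrix.trace ((PV Z - W)ᵀ * (PV Z - W)) + h W) :
    (∀ X : Matrix (Fin m) (Fin k) ℝ,
      (∀ X' : Matrix (Fin m) (Fin k) ℝ,
        (1 / 2) * Matrix.trace ((Z - X)ᵀ * (Z - X)) + h (PV X)
          ≤ (1 / 2) * Matrix.trace ((Z - X')ᵀ * (Z - X')) + h (PV X')) →
      X.mulVec (fun _ => (1 : ℝ)) = Z.mulVec (fun _ => (1 : ℝ))) ∧
    (∀ X : Matrix (Fin m) (Fin k) ℝ,
      (1 / 2) * Matrix.trace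
          ((Z - ((k : ℝ)⁻¹ • (Z * Matrix.of (fun _ _ => (1 : ℝ))) + Wstar))ᵀ *
            (Z - ((k : ℝ)⁻¹ • (Z * Matrix.of (fun _ _ => (1 : ℝ))) + Wstar)))
        + h (PV ((k : ℝ)⁻¹ • (Z * Matrix.of (fun _ _ => (1 : ℝ))) + Wstar))
        ≤ (1 / 2) * Matrix.trace ((Z - X)ᵀ * (Z - X)) + h (PV X)) := by
  have hk0 : (k : ℝ) ≠ 0 := by
    have : (0:ℝ) < k := by exact_mod_cast Nat.lt_of_lt_of_le Nat.zero_lt_one hk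
    linarith
  set J : Matrix (Fin k) (Fin k) ℝ := Matrix.of (fun _ _ => (1 : ℝ)) with hJdef
  replace hPV : ∀ X : Matrix (Fin m) (Fin k) ℝ, PV X = X - (k : ℝ)⁻¹ • (X * J) := hPV
  have hJJ : J * J = (k : ℝ) • J := by
    ext i j
    simp [Matrix.mul_apply, hJdef]
  have hAJ : ∀ (A : Matrix (Fin m) (Fin k) ℝ) (i : Fin m) (j : Fin k),
      (A * J) i j = A.mulVec (fun _ => (1 : ℝ)) i := by
    intro A i j
    simp [Matrix.mul_apply, Matrix.mulVec, dotProduct, hJdef]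
  have hmv : ∀ A : Matrix (Fin m) (Fin k) ℝ,
      A.mulVec (fun _ => (1 : ℝ)) = 0 ↔ A * J = 0 := by
    intro A
    constructor
    · intro hA; ext i j; rw [hAJ, hA]; rfl
    · intro hA; funext i
      have := congrArg (fun M => M i ⟨0, hk⟩) hA
      simpa [hAJ] using this
  have hPVJ : ∀ Y : Matrix (Fin m) (Fin k) ℝ,
      (Y - (k : ℝ)⁻¹ • (Y * J)) * J = 0 := by
    intro Y
    rw [Matrix.sub_mul, Matrix.smul_mul, Matrix.mul_assoc, hJJ]
    rw [Matrix.mul_smul, smul_smul, inv_mul_cancel₀ hk0, one_smul, sub_self]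
  have horth : ∀ C D : Matrix (Fin m) (Fin k) ℝ, D * J = 0 →
      Matrix.trace ((C * J)ᵀ * D) = 0 := by
    intro C D hD
    have hJt : Jᵀ = J := by ext i j; simp [hJdef]
    rw [Matrix.transpose_mul, hJt, Matrix.mul_assoc,
      Matrix.trace_mul_comm, Matrix.mul_assoc, hD, Matrix.mul_zero,
      Matrix.trace_zero]
  have htrnn : ∀ A : Matrix (Fin m) (Fin k) ℝ, 0 ≤ Matrix.trace (Aᵀ * A) := by
    intro A
    have : Matrix.trace (Aᵀ * A) = ∑ j, ∑ i, (A i j)^2 := by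
      simp [Matrix.trace, Matrix.diag, Matrix.mul_apply, sq]
    rw [this]; positivity
  have htr0 : ∀ A : Matrix (Fin m) (Fin k) ℝ, Matrix.trace (Aᵀ * A) = 0 → A = 0 := by
    intro A hA
    have h1 : Matrix.trace (Aᵀ * A) = ∑ j, ∑ i, (A i j)^2 := by
      simp [Matrix.trace, Matrix.diag, Matrix.mul_apply, sq]
    rw [h1] at hA
    ext i j
    have h2 := Finset.sum_eq_zero_iff_of_nonneg (fun j _ => by positivity) |>.mp hA
    have h3 := h2 j (Finset.mem_univ j)
    have h4 := Finset.sum_eq_zero_iff_of_nonneg (fun i _ => by positivity) |>.mp h3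
    have h5 := h4 i (Finset.mem_univ i)
    have := pow_eq_zero_iff (n := 2) (by norm_num) |>.mp h5
    simpa using this
  -- decomposition pieces
  set A : Matrix (Fin m) (Fin k) ℝ → Matrix (Fin m) (Fin k) ℝ :=
    fun X => ((k : ℝ)⁻¹ • (Z - X)) * J with hAdef
  have hBJ : ∀ X, (PV Z - PV X) * J = 0 := by
    intro X
    have hB : PV Z - PV X = (Z - X) - (k : ℝ)⁻¹ • ((Z - X) * J) := by
      rw [hPV, hPV, Matrix.sub_mul, smul_sub]
      abel
    rw [hB]; exact hPVJ (Z - X)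
  have hsum : ∀ X, Z - X = A X + (PV Z - PV X) := by
    intro X
    have hB : PV Z - PV X = (Z - X) - (k : ℝ)⁻¹ • ((Z - X) * J) := by
      rw [hPV, hPV, Matrix.sub_mul, smul_sub]
      abel
    rw [hB, hAdef]
    simp only [Matrix.smul_mul]
    abel
  have hpyth : ∀ X, Matrix.trace ((Z - X)ᵀ * (Z - X)) =
      Matrix.trace ((A X)ᵀ * (A X)) +
      Matrix.trace ((PV Z - PV X)ᵀ * (PV Z - PV X)) := by
    intro X
    set B := PV Z - PV X with hBdef
    have h1 : Matrix.trace ((A X)ᵀ * B) = 0 := horth _ _ (hBJ X)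
    have h2 : Matrix.trace (Bᵀ * (A X)) = 0 := by
      have : (Bᵀ * A X)ᵀ = (A X)ᵀ * B := by
        rw [Matrix.transpose_mul, Matrix.transpose_transpose]
      calc Matrix.trace (Bᵀ * A X) = Matrix.trace ((Bᵀ * A X)ᵀ) :=
            (Matrix.trace_transpose _).symm
        _ = 0 := by rw [this, h1]
    rw [hsum X, Matrix.transpose_add, Matrix.add_mul, Matrix.mul_add,
      Matrix.mul_add, Matrix.trace_add, Matrix.trace_add, Matrix.trace_add,
      h1, h2]
    ring
  -- PV X has zero row sums
  have hPVmem : ∀ X, (PV X).mulVec (fun _ => (1 : ℝ)) = 0 := by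
    intro X
    rw [hmv, hPV]
    exact hPVJ X
  -- facts about Xstar
  set Xs : Matrix (Fin m) (Fin k) ℝ := (k : ℝ)⁻¹ • (Z * J) + Wstar with hXsdef
  have hWJ : Wstar * J = 0 := (hmv Wstar).mp hWmem
  have hXsJ : Xs * J = Z * J := by
    rw [hXsdef, Matrix.add_mul, Matrix.smul_mul, Matrix.mul_assoc, hJJ, hWJ,
      Matrix.mul_smul, smul_smul, inv_mul_cancel₀ hk0, one_smul, add_zero]
  have hPVXs : PV Xs = Wstar := by
    rw [hPV, hXsJ, hXsdef]
    abel
  have hZXs : Z - Xs = PV Z - Wstar := by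
    rw [hPV, hXsdef]
    abel
  -- core bound: F(Xs) ≤ ½ tr(BᵀB) + h (PV X)
  have hcore : ∀ X : Matrix (Fin m) (Fin k) ℝ,
      (1 / 2) * Matrix.trace ((Z - Xs)ᵀ * (Z - Xs)) + h (PV Xs)
        ≤ (1 / 2) * Matrix.trace ((PV Z - PV X)ᵀ * (PV Z - PV X)) + h (PV X) := by
    intro X
    rw [hZXs, hPVXs]
    exact hWmin (PV X) (hPVmem X)
  constructor
  · intro X hXmin
    have h1 := hXmin Xs
    have h2 := hcore X
    have h3 := hpyth X
    have h4 := htrnn (A X)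
    have h5 : Matrix.trace ((A X)ᵀ * (A X)) = 0 := by linarith
    have h6 : A X = 0 := htr0 _ h5
    have h7 : ((k : ℝ)⁻¹ • (Z - X)).mulVec (fun _ => (1 : ℝ)) = 0 :=
      (hmv _).mpr h6
    rw [Matrix.smul_mulVec, smul_eq_zero] at h7
    rcases h7 with h7 | h7
    · exact absurd h7 (inv_ne_zero hk0)
    · rw [Matrix.sub_mulVec, sub_eq_zero] at h7
      exact h7.symm
  · intro X
    have h2 := hcore X
    have h3 := hpyth X
    have h4 := htrnn (A X)
    calc (1 / 2) * Matrix.trace ((Z - Xs)ᵀ * (Z - Xs)) + h (PV Xs)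
        ≤ (1 / 2) * Matrix.trace ((PV Z - PV X)ᵀ * (PV Z - PV X)) + h (PV X) := h2
      _ ≤ (1 / 2) * Matrix.trace ((Z - X)ᵀ * (Z - X)) + h (PV X) := by linarith
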